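/- Let H be a finite abelian group admitting a linking form λ : H × H → ℚ/ℤ together with an automorphism Φ of H satisfying λ(Φ(a),Φ(b)) = -λ(a,b) for all a,b. Then for every prime p with p ≡ 3 mod 4, either p does not divide |H| or p² divides |H|. -/
import Mathlib


/-- `ℚ/ℤ` as an additive group. -/
abbrev QZ : Type := AddCircle (1 : ℚ)

/-- A linking form on a finitely generated abelian group `H`: a bilinear, symmetric,
nonsingular pairing into `ℚ/ℤ`.  Nonsingularity is expressed by saying that the adjoint
map `a ↦ (b ↦ λ a b)` is injective and surjective onto `Hom(H, ℚ/ℤ)`. -/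
structure LinkingForm (H : Type*) [AddCommGroup H] where
  form : H → H → QZ
  add_left : ∀ a b c : H, form (a + b) c = form a c + form b c
  add_right : ∀ a b c : H, form a (b + c) = form a b + form a c
  symm : ∀ a b : H, form a b = form b a
  adjoint_injective : ∀ a : H, (∀ b : H, form a b = 0) → a = 0
  adjoint_surjective : ∀ f : H →+ QZ, ∃ a : H, ∀ b : H, form a b = f b

/-- The `p`-primary part of an abelian group: elements killed by a power of `p`. -/
def primaryPart (H : Type*) [AddCommGroup H] (p : ℕ) : AddSubgroup H where
  carrier := {g | ∃ k : ℕ, p ^ k • g = 0}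
  zero_mem' := ⟨0, smul_zero _⟩
  add_mem' := by
    rintro a b ⟨k, hk⟩ ⟨l, hl⟩
    refine ⟨k + l, ?_⟩
    have ha : p ^ (k + l) • a = 0 := by rw [pow_add, mul_comm, mul_smul, hk, smul_zero]
    have hb : p ^ (k + l) • b = 0 := by rw [pow_add, mul_smul, hl, smul_zero]
    rw [smul_add, ha, hb, add_zero]
  neg_mem' := by rintro a ⟨k, hk⟩; exact ⟨k, by rw [smul_neg, hk, neg_zero]⟩

/-- The standard pairing `(a, b) ↦ (k/pⁿ)·a·b` on `ℤ/pⁿ`, with values in `ℚ/ℤ`. -/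
noncomputable def stdPairing (p n : ℕ) (k : ℤ) (a b : ZMod (p ^ n)) : QZ :=
  ((((k : ℚ) * (a.val : ℚ) * (b.val : ℚ)) / (p : ℚ) ^ n : ℚ) : QZ)

section GoeritzAux

variable {H : Type*} [AddCommGroup H]

lemma LinkingForm.zero_left (lf : LinkingForm H) (c : H) : lf.form 0 c = 0 := by
  have h := lf.add_left 0 0 c
  rw [add_zero] at h
  exact (left_eq_add.mp h)

/-- The linking form as an additive hom in the left variable. -/
def LinkingForm.leftHom (lf : LinkingForm H) (c : H) : H →+ QZ where
  toFun a := lf.form a c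
  map_zero' := lf.zero_left c
  map_add' a b := lf.add_left a b c

lemma LinkingForm.zsmul_left (lf : LinkingForm H) (m : ℤ) (a c : H) :
    lf.form (m • a) c = m • lf.form a c :=
  map_zsmul (lf.leftHom c) m a

lemma LinkingForm.zsmul_right (lf : LinkingForm H) (m : ℤ) (a c : H) :
    lf.form a (m • c) = m • lf.form a c := by
  rw [lf.symm, lf.zsmul_left, lf.symm]

lemma LinkingForm.nsmul_left (lf : LinkingForm H) (m : ℕ) (a c : H) :
    lf.form (m • a) c = m • lf.form a c :=
  map_nsmul (lf.leftHom c) m a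

end GoeritzAux

/-- Goeritz, algebraic form: if a finite abelian group with a linking form
admits an automorphism `Φ` with `λ(Φa,Φb) = -λ(a,b)`, then for every prime `p ≡ 3 mod 4`,
either `p ∤ |H|` or `p² ∣ |H|`. -/
theorem goeritz_algebraic {H : Type*} [AddCommGroup H] [Finite H]
    (lf : LinkingForm H) (Φ : H ≃+ H)
    (hΦ : ∀ a b : H, lf.form (Φ a) (Φ b) = - lf.form a b)
    (p : ℕ) (hp : p.Prime) (hp4 : p % 4 = 3) :
    ¬ (p ∣ Nat.card H) ∨ p ^ 2 ∣ Nat.card H := by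
  by_cases h2 : p ^ 2 ∣ Nat.card H
  · exact Or.inr h2
  left
  intro h1
  haveI : Fact p.Prime := ⟨hp⟩
  haveI : Fintype H := Fintype.ofFinite H
  -- an element of order p
  obtain ⟨x, hx⟩ := exists_prime_addOrderOf_dvd_card (G := H) p
    (by rwa [← Nat.card_eq_fintype_card])
  have hpx : p • x = 0 := by rw [← hx]; exact addOrderOf_nsmul_eq_zero x
  have hx0 : x ≠ 0 := by
    intro h
    rw [h, addOrderOf_zero] at hx
    exact hp.one_lt.ne hx
  -- the p-torsion subgroup
  set T : AddSubgroup H :=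
    { carrier := {g : H | p • g = 0}
      zero_mem' := smul_zero _
      add_mem' := by
        intro a b ha hb
        simp only [Set.mem_setOf_eq, smul_add] at *
        rw [ha, hb, add_zero]
      neg_mem' := by
        intro a ha
        simp only [Set.mem_setOf_eq, smul_neg] at *
        rw [ha, neg_zero] } with hTdef
  have hmemT : ∀ g : H, g ∈ T ↔ p • g = 0 := fun g => Iff.rfl
  -- zmultiples x ≤ T
  have hle : AddSubgroup.zmultiples x ≤ T := by
    intro g hg
    obtain ⟨k, hk⟩ := AddSubgroup.mem_zmultiples_iff.mp hg
    rw [hmemT, ← hk, smul_comm, hpx, smul_zero]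
  have hcardzm : Nat.card (AddSubgroup.zmultiples x) = p := by
    rw [Nat.card_zmultiples, hx]
  -- T is a p-group, so its card is a power of p
  have hpg : IsPGroup p (Multiplicative T) := by
    intro g
    have h0 : (p ^ 1) • (Multiplicative.toAdd g) = (0 : T) := by
      apply Subtype.ext
      have hg2 := (Multiplicative.toAdd g).2
      rw [hmemT] at hg2
      simp only [pow_one]
      exact hg2
    refine ⟨1, Multiplicative.toAdd.injective ?_⟩
    rw [toAdd_pow, toAdd_one]
    exact h0
  obtain ⟨n, hn⟩ := IsPGroup.iff_card.mp hpg
  have hcardT : Nat.card T = p ^ n := hn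
  have hTdvd : Nat.card T ∣ Nat.card H := AddSubgroup.card_addSubgroup_dvd_card T
  -- n = 1
  have hple : p ≤ Nat.card T := by
    calc p = Nat.card (AddSubgroup.zmultiples x) := hcardzm.symm
      _ ≤ Nat.card T := Nat.card_mono (Set.toFinite _) hle
  have hp2 := hp.two_le
  have hn1 : n = 1 := by
    rw [hcardT] at hple
    rcases Nat.lt_or_ge n 2 with h | h
    · have h01 : n = 0 ∨ n = 1 := by omega
      rcases h01 with h0 | h1
      · rw [h0, pow_zero] at hple; omega
      · exact h1
    · exact absurd (dvd_trans (pow_dvd_pow p h) (hcardT ▸ hTdvd)) h2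
  have hTeq : AddSubgroup.zmultiples x = T := by
    apply AddSubgroup.eq_of_le_of_card_ge hle
    rw [hcardT, hn1, pow_one, hcardzm]
  have hTcyc : ∀ g : H, p • g = 0 → ∃ m : ℤ, g = m • x := by
    intro g hg
    have : g ∈ AddSubgroup.zmultiples x := hTeq ▸ (hmemT g).mpr hg
    obtain ⟨m, hm⟩ := AddSubgroup.mem_zmultiples_iff.mp this
    exact ⟨m, hm.symm⟩
  -- p • lf.form x b = 0 for all b
  have hkill : ∀ b : H, (p : ℤ) • lf.form x b = 0 := by
    intro b
    rw [← lf.zsmul_left, natCast_zsmul, hpx, lf.zero_left]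
  -- find b with form x b ≠ 0
  have hexb : ∃ b : H, lf.form x b ≠ 0 := by
    by_contra h
    push_neg at h
    exact hx0 (lf.adjoint_injective x h)
  obtain ⟨b, hb⟩ := hexb
  -- decompose b
  obtain ⟨m, hm⟩ := h1
  have hpm : ¬ p ∣ m := by
    intro h
    apply h2
    obtain ⟨k, hk⟩ := h
    exact ⟨k, by rw [hm, hk]; ring⟩
  have hco : IsCoprime (p : ℤ) (m : ℤ) := by
    rw [Int.isCoprime_iff_gcd_eq_one, Int.gcd_natCast_natCast]
    exact hp.coprime_iff_not_dvd.mpr hpm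
  obtain ⟨a, c, hac⟩ := hco
  have hsplit : (a * p) • b + (c * m) • b = b := by
    rw [← add_zsmul, hac, one_zsmul]
  -- the part (c*m) • b is p-torsion
  have hbp : p • ((c * (m : ℤ)) • b) = 0 := by
    have hnb : (p * m) • b = 0 := by rw [← hm]; exact card_nsmul_eq_zero'
    calc p • ((c * (m : ℤ)) • b) = ((p : ℕ) : ℤ) • ((c * (m : ℤ)) • b) :=
          (natCast_zsmul ((c * (m : ℤ)) • b) p).symm
      _ = c • (((p * m : ℕ) : ℤ) • b) := by rw [smul_smul, smul_smul]; push_cast; ring_nf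
      _ = c • ((p * m) • b) := by rw [natCast_zsmul]
      _ = 0 := by rw [hnb, smul_zero]
  obtain ⟨m', hm'⟩ := hTcyc _ hbp
  -- form x b = m' • form x x
  have hfb : lf.form x b = m' • lf.form x x := by
    conv_lhs => rw [← hsplit]
    rw [lf.add_right]
    have h1' : lf.form x ((a * p) • b) = 0 := by
      rw [lf.zsmul_right, mul_zsmul, hkill, smul_zero]
    rw [h1', zero_add, hm', lf.zsmul_right]
  set d := lf.form x x with hd
  have hdne : d ≠ 0 := by
    intro h
    rw [hfb] at hb
    exact hb (by rw [h, smul_zero])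
  have hpd : p • d = 0 := by
    rw [hd, ← lf.nsmul_left, hpx, lf.zero_left]
  -- Φ x = u • x
  have hΦx : p • (Φ x) = 0 := by
    rw [← map_nsmul, hpx, map_zero]
  obtain ⟨u, hu⟩ := hTcyc _ hΦx
  -- (u² + 1) • d = 0
  have hu2 : (u * u + 1) • d = 0 := by
    have h := hΦ x x
    rw [hu, lf.zsmul_left, lf.zsmul_right, ← hd, smul_smul] at h
    rw [add_zsmul, h, one_zsmul, neg_add_cancel]
  -- addOrderOf d = p
  have hod : addOrderOf d = p := by
    have hdvd : addOrderOf d ∣ p := addOrderOf_dvd_of_nsmul_eq_zero hpd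
    rcases (Nat.Prime.eq_one_or_self_of_dvd hp _ hdvd) with h | h
    · exfalso
      exact hdne (AddMonoid.addOrderOf_eq_one_iff.mp h)
    · exact h
  have hpdvd : (p : ℤ) ∣ u * u + 1 := by
    rw [← hod]
    exact addOrderOf_dvd_iff_zsmul_eq_zero.mpr hu2
  -- contradiction with p ≡ 3 mod 4
  have hsq : IsSquare (-1 : ZMod p) := by
    refine ⟨(u : ZMod p), ?_⟩
    have : ((u * u + 1 : ℤ) : ZMod p) = 0 :=
      (ZMod.intCast_zmod_eq_zero_iff_dvd _ p).mpr hpdvd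
    push_cast at this
    linear_combination -this
  rw [ZMod.exists_sq_eq_neg_one_iff] at hsq
  exact hsq hp4
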